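/- Let n be a natural number. The group of units M* of the monoid (M_n(ℤ), *) is exactly the set { [a_ij] ∈ M_n(ℤ) : a_ii ∈ {0, −1} for all 1 ≤ i ≤ n }. Moreover, for 𝔞 ∈ M_n(ℤ), the translation endomorphism t_𝔞 is an automorphism of G_n if and only if 𝔞 ∈ M*. -/

import Mathlib

/-- The defining relations of the combinatorial Hantzsche-Wendt group `G_n`:
`x_i⁻¹ x_j² x_i = x_j⁻²` for all `i ≠ j`, written as relators. -/
def HWrels (n : ℕ) : Set (FreeGroup (Fin n)) :=
  {r | ∃ i j : Fin n, i ≠ j ∧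
    r = (FreeGroup.of i)⁻¹ * FreeGroup.of j ^ 2 * FreeGroup.of i * FreeGroup.of j ^ 2}

/-- The combinatorial Hantzsche-Wendt group `G_n`. -/
abbrev HW (n : ℕ) : Type := PresentedGroup (HWrels n)

/-- The generators `x_1, …, x_n` of `G_n`. -/
def x (n : ℕ) (i : Fin n) : HW n := PresentedGroup.of i

/-- A type synonym for `M = M_n(ℤ)`, carrying the monoid structure given by
`𝔞 * 𝔟 = [c_ij]` with `c_ij = a_ij + (1 + 2 a_jj) b_ij`. -/
def MM (n : ℕ) : Type := Matrix (Fin n) (Fin n) ℤ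

instance (n : ℕ) : Mul (MM n) :=
  ⟨fun 𝔞 𝔟 i j => 𝔞 i j + (1 + 2 * 𝔞 j j) * 𝔟 i j⟩

instance (n : ℕ) : One (MM n) := ⟨fun _ _ => (0 : ℤ)⟩

theorem MM.mul_apply {n : ℕ} (𝔞 𝔟 : MM n) (i j : Fin n) :
    (𝔞 * 𝔟) i j = 𝔞 i j + (1 + 2 * 𝔞 j j) * 𝔟 i j := rfl

theorem MM.one_apply {n : ℕ} (i j : Fin n) : (1 : MM n) i j = 0 := rfl

theorem MM.ext {n : ℕ} {𝔞 𝔟 : MM n} (h : ∀ i j, 𝔞 i j = 𝔟 i j) : 𝔞 = 𝔟 :=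
  funext fun i => funext fun j => h i j

instance (n : ℕ) : Monoid (MM n) where
  mul_assoc a b c := MM.ext fun i j => by
    simp only [MM.mul_apply]; ring
  one_mul a := MM.ext fun i j => by simp only [MM.mul_apply, MM.one_apply]; ring
  mul_one a := MM.ext fun i j => by simp only [MM.mul_apply, MM.one_apply]; ring

/-- For an `n × n` integer matrix `𝔞 = [a_ij]`, the element
`a_i = (x_1²)^{a_i1} ⋯ (x_n²)^{a_in}` of `A_n ≤ G_n`. -/
def aElt (n : ℕ) (𝔞 : MM n) (i : Fin n) : HW n :=
  ((List.finRange n).map fun j => (x n j ^ 2) ^ 𝔞 i j).prod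


namespace HWaux
variable {n : ℕ}

theorem mk_rel_one {r : FreeGroup (Fin n)} (hr : r ∈ HWrels n) :
    PresentedGroup.mk (HWrels n) r = 1 :=
  (QuotientGroup.eq_one_iff r).2 (Subgroup.subset_normalClosure hr)

theorem rel0 {i j : Fin n} (h : i ≠ j) :
    (x n i)⁻¹ * x n j ^ 2 * x n i * x n j ^ 2 = 1 := by
  simpa [x, PresentedGroup.of, map_mul, map_inv, map_pow] using mk_rel_one ⟨i, j, h, rfl⟩

/-- `x_i⁻¹ x_j² x_i = (x_j²)⁻¹` for `i ≠ j`. -/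
theorem rel1 {i j : Fin n} (h : i ≠ j) :
    (x n i)⁻¹ * x n j ^ 2 * x n i = (x n j ^ 2)⁻¹ :=
  mul_eq_one_iff_eq_inv.1 (rel0 h)

/-- `x_i x_j² x_i⁻¹ = (x_j²)⁻¹` for `i ≠ j`. -/
theorem rel2 {i j : Fin n} (h : i ≠ j) :
    x n i * x n j ^ 2 * (x n i)⁻¹ = (x n j ^ 2)⁻¹ := by
  have h2 := rel0 h
  have h3 : x n j ^ 2 * (x n i * x n j ^ 2 * (x n i)⁻¹) = 1 := by
    have := congrArg (fun g => x n i * g * (x n i)⁻¹) h2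
    simpa [x, mul_assoc] using this
  exact eq_inv_of_mul_eq_one_right h3

theorem rel2' {i j : Fin n} (h : i ≠ j) :
    x n i * (x n j ^ 2)⁻¹ * (x n i)⁻¹ = x n j ^ 2 := by
  calc x n i * (x n j ^ 2)⁻¹ * (x n i)⁻¹ = (x n i * x n j ^ 2 * (x n i)⁻¹)⁻¹ := by group
  _ = x n j ^ 2 := by rw [rel2 h, inv_inv]

theorem sq_comm (i j : Fin n) : Commute (x n i ^ 2) (x n j ^ 2) := by
  rcases eq_or_ne i j with rfl | h
  · exact Commute.refl _
  · show _ = _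
    calc x n i ^ 2 * x n j ^ 2
        = (x n i * (x n i * x n j ^ 2 * (x n i)⁻¹) * (x n i)⁻¹) * x n i ^ 2 := by rw [sq, sq]; group
      _ = x n j ^ 2 * x n i ^ 2 := by rw [rel2 h, rel2' h]

def prodA (n : ℕ) (c : Fin n → ℤ) : HW n :=
  ((List.finRange n).map fun j => (x n j ^ 2) ^ (c j)).prod

theorem commute_xsq_prodA (i : Fin n) (a : ℤ) (c : Fin n → ℤ) :
    Commute ((x n i ^ 2) ^ a) (prodA n c) := by
  apply Commute.list_prod_right
  intro y hy
  obtain ⟨j, -, rfl⟩ := List.mem_map.1 hy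
  exact (sq_comm i j).zpow_zpow a (c j)

theorem prodA_mul (c d : Fin n → ℤ) : prodA n c * prodA n d = prodA n (c + d) := by
  unfold prodA
  generalize List.finRange n = L
  induction L with
  | nil => simp
  | cons a L ih =>
    simp only [List.map_cons, List.prod_cons]
    have hc : Commute ((x n a ^ 2) ^ (d a)) ((L.map fun j => (x n j ^ 2) ^ (c j)).prod) := by
      apply Commute.list_prod_right
      intro y hy
      obtain ⟨j, -, rfl⟩ := List.mem_map.1 hy
      exact (sq_comm a j).zpow_zpow (d a) (c j)
    calc (x n a ^ 2) ^ c a * (L.map fun j => (x n j ^ 2) ^ (c j)).prod *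
          ((x n a ^ 2) ^ d a * (L.map fun j => (x n j ^ 2) ^ (d j)).prod)
        = (x n a ^ 2) ^ c a * ((L.map fun j => (x n j ^ 2) ^ (c j)).prod *
            (x n a ^ 2) ^ d a) * (L.map fun j => (x n j ^ 2) ^ (d j)).prod := by group
      _ = (x n a ^ 2) ^ c a * ((x n a ^ 2) ^ d a *
            (L.map fun j => (x n j ^ 2) ^ (c j)).prod) * (L.map fun j => (x n j ^ 2) ^ (d j)).prod := by
          rw [hc.eq]
      _ = ((x n a ^ 2) ^ c a * (x n a ^ 2) ^ d a) *
          ((L.map fun j => (x n j ^ 2) ^ (c j)).prod *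
           (L.map fun j => (x n j ^ 2) ^ (d j)).prod) := by group
      _ = (x n a ^ 2) ^ ((c + d) a) * (L.map fun j => (x n j ^ 2) ^ ((c + d) j)).prod := by
          rw [ih, ← zpow_add]; rfl

theorem prodA_zero : prodA n (0 : Fin n → ℤ) = 1 := by
  unfold prodA
  apply List.prod_eq_one
  intro y hy
  obtain ⟨j, -, rfl⟩ := List.mem_map.1 hy
  simp

theorem prodA_single (j : Fin n) (m : ℤ) :
    prodA n (fun k => if k = j then m else 0) = (x n j ^ 2) ^ m := by
  unfold prodA
  have hnd := List.nodup_finRange n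
  have hmem := List.mem_finRange j
  generalize List.finRange n = L at hnd hmem ⊢
  induction L with
  | nil => simp at hmem
  | cons a L ih =>
    simp only [List.map_cons, List.prod_cons]
    rcases List.nodup_cons.1 hnd with ⟨ha, hL⟩
    rcases eq_or_ne a j with rfl | haj
    · have h1 : (L.map fun k => (x n k ^ 2) ^ (if k = a then m else 0 : ℤ)).prod = 1 := by
        apply List.prod_eq_one
        intro y hy
        obtain ⟨k, hk, rfl⟩ := List.mem_map.1 hy
        have hk' : k ≠ a := fun h => ha (h ▸ hk)
        simp [hk']
      rw [show (if a = a then m else 0 : ℤ) = m from if_pos rfl, h1, mul_one]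
    · have hj : j ∈ L := by
        rcases List.mem_cons.1 hmem with h | h
        · exact absurd h.symm haj
        · exact h
      rw [ih hL hj, show (if a = j then m else 0 : ℤ) = 0 from if_neg haj, zpow_zero, one_mul]

theorem conj_zpow_eq (g u : HW n) (m : ℤ) :
    g⁻¹ * u ^ m * g = (g⁻¹ * u * g) ^ m := by
  have := @conj_zpow (HW n) _ m g⁻¹ u
  simpa [inv_inv] using this.symm

theorem conj_prodA (i : Fin n) (c : Fin n → ℤ) :
    (x n i)⁻¹ * prodA n c * x n i = prodA n (fun k => if k = i then c k else -(c k)) := by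
  have key : ∀ k : Fin n, (x n i)⁻¹ * (x n k ^ 2) ^ (c k) * x n i
      = (x n k ^ 2) ^ (if k = i then c k else -(c k) : ℤ) := by
    intro k
    rcases eq_or_ne k i with rfl | hki
    · rw [conj_zpow_eq, if_pos rfl]
      congr 1
      group
    · rw [conj_zpow_eq, rel1 hki.symm, if_neg hki, inv_zpow, ← zpow_neg]
  unfold prodA
  have hhom : (x n i)⁻¹ * ((List.finRange n).map fun j => (x n j ^ 2) ^ (c j)).prod * x n i
      = (((List.finRange n).map fun j => (x n j ^ 2) ^ (c j)).map
          fun u => (x n i)⁻¹ * u * x n i).prod := by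
    generalize ((List.finRange n).map fun j => (x n j ^ 2) ^ (c j)) = L
    induction L with
    | nil => simp
    | cons a L ih => simp only [List.map_cons, List.prod_cons, ← ih]; group
  rw [hhom, List.map_map]
  congr 1
  apply List.map_congr_left
  intro a _
  exact key a

theorem xp_sq (c : Fin n → ℤ) (j : Fin n) :
    (x n j * prodA n c) ^ 2 = (x n j ^ 2) ^ (1 + 2 * c j) := by
  have e1 : (x n j * prodA n c) ^ 2
      = x n j ^ 2 * ((x n j)⁻¹ * prodA n c * x n j) * prodA n c := by
    rw [sq, sq]; group
  rw [e1, conj_prodA, mul_assoc, prodA_mul]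
  have e2 : ((fun k => if k = j then c k else -(c k)) + c)
      = fun k => if k = j then 2 * c j else 0 := by
    funext k
    rcases eq_or_ne k j with rfl | hkj
    · simp [Pi.add_apply]; ring
    · simp [Pi.add_apply, hkj]
  rw [e2, prodA_single, zpow_add, zpow_one]

theorem xp_rel (c d : Fin n → ℤ) {i j : Fin n} (hij : i ≠ j) :
    (x n i * prodA n c)⁻¹ * (x n j * prodA n d) ^ 2 * (x n i * prodA n c) *
      (x n j * prodA n d) ^ 2 = 1 := by
  rw [xp_sq d j]
  have h1 : (x n i)⁻¹ * (x n j ^ 2) ^ (1 + 2 * d j) * x n i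
      = (x n j ^ 2) ^ (-(1 + 2 * d j)) := by
    rw [conj_zpow_eq, rel1 hij, inv_zpow, ← zpow_neg]
  have e : (x n i * prodA n c)⁻¹ * (x n j ^ 2) ^ (1 + 2 * d j) * (x n i * prodA n c)
      = (prodA n c)⁻¹ * ((x n i)⁻¹ * (x n j ^ 2) ^ (1 + 2 * d j) * x n i) * prodA n c := by
    group
  rw [e, h1]
  have h2 : Commute (prodA n c) ((x n j ^ 2) ^ (-(1 + 2 * d j))) :=
    (commute_xsq_prodA j _ c).symm
  rw [mul_assoc ((prodA n c)⁻¹) _ (prodA n c), ← h2.eq, inv_mul_cancel_left, ← zpow_add,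
    neg_add_cancel, zpow_zero]

theorem map_prodA (f : HW n →* HW n) (ε : Fin n → ℤ)
    (hf : ∀ k, f (x n k ^ 2) = (x n k ^ 2) ^ (ε k)) (c : Fin n → ℤ) :
    f (prodA n c) = prodA n (fun j => ε j * c j) := by
  unfold prodA
  rw [map_list_prod, List.map_map]
  congr 1
  apply List.map_congr_left
  intro a _
  show f ((x n a ^ 2) ^ (c a)) = (x n a ^ 2) ^ (ε a * c a)
  rw [map_zpow, hf, ← zpow_mul]

theorem f_sq (𝔞 : MM n) (f : HW n →* HW n)
    (hf : ∀ i, f (x n i) = x n i * prodA n (𝔞 i)) (k : Fin n) :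
    f (x n k ^ 2) = (x n k ^ 2) ^ (1 + 2 * 𝔞 k k) := by
  rw [map_pow, hf, xp_sq]

theorem part1 (𝔞 : MM n) : IsUnit 𝔞 ↔ ∀ i, 𝔞 i i = 0 ∨ 𝔞 i i = -1 := by
  constructor
  · rintro ⟨u, rfl⟩ i
    have h : ((u : MM n) * (↑u⁻¹ : MM n)) i i = (1 : MM n) i i := by rw [u.mul_inv]
    rw [MM.mul_apply, MM.one_apply] at h
    set p := (u : MM n) i i
    set q := (↑u⁻¹ : MM n) i i
    have hd : (1 + 2 * p) ∣ 1 := by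
      have h1 : (1 + 2 * p) ∣ p := ⟨-q, by linarith⟩
      have h2 : (1 + 2 * p) ∣ 2 * p := h1.mul_left 2
      have h3 : (1 + 2 * p) ∣ (1 + 2 * p) := dvd_rfl
      simpa using (Dvd.dvd.sub h3 h2)
    rcases Int.isUnit_iff.1 (isUnit_of_dvd_one hd) with h' | h' <;> omega
  · intro h
    set 𝔟 : MM n := fun i j => -(1 + 2 * 𝔞 j j) * 𝔞 i j with hb
    have h1 : 𝔞 * 𝔟 = 1 := MM.ext fun i j => by
      simp only [MM.mul_apply, MM.one_apply]; simp only [hb]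
      rcases h j with h' | h' <;> rw [h'] <;> ring
    have h2 : 𝔟 * 𝔞 = 1 := MM.ext fun i j => by
      simp only [MM.mul_apply, MM.one_apply]; simp only [hb]
      rcases h j with h' | h' <;> rw [h'] <;> ring
    exact ⟨⟨𝔞, 𝔟, h1, h2⟩, rfl⟩

theorem bijective_of_unit (𝔞 : MM n) (f : HW n →* HW n)
    (hf : ∀ i, f (x n i) = x n i * prodA n (𝔞 i)) (h : IsUnit 𝔞) :
    Function.Bijective f := by
  obtain ⟨u, rfl⟩ := h
  set 𝔟 : MM n := ↑u⁻¹ with hbdef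
  have hrels : ∀ r ∈ HWrels n,
      FreeGroup.lift (fun i => x n i * prodA n (𝔟 i)) r = 1 := by
    rintro r ⟨i, j, hij, rfl⟩
    simp only [map_mul, map_inv, map_pow, FreeGroup.lift_apply_of]
    exact xp_rel _ _ hij
  set g : HW n →* HW n := PresentedGroup.toGroup hrels with hgdef
  have hg : ∀ i, g (x n i) = x n i * prodA n (𝔟 i) := fun i => PresentedGroup.toGroup.of hrels
  -- key composition computation
  have comp_id : ∀ (𝔠 𝔡 : MM n) (p q : HW n →* HW n),
      (∀ i, p (x n i) = x n i * prodA n (𝔠 i)) →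
      (∀ i, q (x n i) = x n i * prodA n (𝔡 i)) →
      𝔡 * 𝔠 = 1 → ∀ z, q (p z) = z := by
    intro 𝔠 𝔡 p q hp hq hdc z
    have : q.comp p = MonoidHom.id (HW n) := by
      apply PresentedGroup.ext
      intro i
      have e1 : (q.comp p) (PresentedGroup.of i) = q (x n i * prodA n (𝔠 i)) := by
        simp only [MonoidHom.comp_apply]
        rw [show (PresentedGroup.of i : HW n) = x n i from rfl, hp]
      rw [e1, map_mul, hq, map_prodA q (fun k => 1 + 2 * 𝔡 k k) (f_sq 𝔡 q hq), mul_assoc,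
        prodA_mul]
      have : (𝔡 i + fun j => (1 + 2 * 𝔡 j j) * 𝔠 i j) = (fun j => (𝔡 * 𝔠) i j) := by
        funext j
        simp [MM.mul_apply]
      rw [this, show (fun j => (𝔡 * 𝔠) i j) = (0 : Fin n → ℤ) from by
        funext j; rw [hdc]; rfl, prodA_zero, mul_one]
      rfl
    exact DFunLike.congr_fun this z
  have hgf : ∀ z, g (f z) = z :=
    comp_id ↑u 𝔟 f g hf hg (by rw [hbdef, ← Units.val_mul, inv_mul_cancel, Units.val_one])
  have hfg : ∀ z, f (g z) = z :=
    comp_id 𝔟 ↑u g f hg hf (by rw [hbdef, ← Units.val_mul, mul_inv_cancel, Units.val_one])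
  exact ⟨Function.LeftInverse.injective hgf, Function.RightInverse.surjective hfg⟩

/-! ### The subgroup `A` and the quotient `W` -/

def Agrp (n : ℕ) : Subgroup (HW n) := Subgroup.closure (Set.range fun k => x n k ^ 2)

theorem Agrp_normal : (Agrp n).Normal := by
  have map_le : ∀ g : HW n, (∀ k, g * (x n k ^ 2) * g⁻¹ ∈ Agrp n) →
      ∀ h ∈ Agrp n, g * h * g⁻¹ ∈ Agrp n := by
    intro g hg h hh
    have hm : (Agrp n).map (MulAut.conj g).toMonoidHom ≤ Agrp n := by
      rw [Agrp, MonoidHom.map_closure, Subgroup.closure_le]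
      rintro _ ⟨_, ⟨k, rfl⟩, rfl⟩
      simpa [MulAut.conj_apply, Agrp] using hg k
    exact hm ⟨h, hh, by simp [MulAut.conj_apply]⟩
  have base : ∀ i k : Fin n, (x n i * (x n k ^ 2) * (x n i)⁻¹ ∈ Agrp n) ∧
      ((x n i)⁻¹ * (x n k ^ 2) * ((x n i)⁻¹)⁻¹ ∈ Agrp n) := by
    intro i k
    have hk : x n k ^ 2 ∈ Agrp n := Subgroup.subset_closure ⟨k, rfl⟩
    rcases eq_or_ne i k with rfl | hik
    · constructor
      · rw [show x n i * (x n i ^ 2) * (x n i)⁻¹ = x n i ^ 2 from by group]; exact hk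
      · rw [show (x n i)⁻¹ * (x n i ^ 2) * ((x n i)⁻¹)⁻¹ = x n i ^ 2 from by group]; exact hk
    · constructor
      · rw [rel2 hik]; exact inv_mem hk
      · rw [inv_inv, rel1 hik]; exact inv_mem hk
  rw [← Subgroup.normalizer_eq_top_iff, eq_top_iff, ← PresentedGroup.closure_range_of (HWrels n),
    Subgroup.closure_le]
  rintro _ ⟨i, rfl⟩
  rw [SetLike.mem_coe, Subgroup.mem_normalizer_iff]
  intro h
  constructor
  · intro hh
    exact map_le _ (fun k => (base i k).1) h hh
  · intro hh
    have := map_le ((x n i)⁻¹) (fun k => (base i k).2) _ hh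
    simpa [x, mul_assoc] using this

def Wrels (n : ℕ) : Set (FreeGroup (Fin n)) :=
  HWrels n ∪ Set.range (fun i : Fin n => FreeGroup.of i ^ 2)

theorem lift_eq_mk : FreeGroup.lift (fun i => (PresentedGroup.of i : PresentedGroup (Wrels n)))
    = (PresentedGroup.mk (Wrels n)) :=
  FreeGroup.ext_hom _ _ fun a => by rw [FreeGroup.lift_apply_of]; rfl

theorem pi_rels : ∀ r ∈ HWrels n,
    FreeGroup.lift (fun i => (PresentedGroup.of i : PresentedGroup (Wrels n))) r = 1 := by
  intro r hr
  rw [lift_eq_mk]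
  exact (QuotientGroup.eq_one_iff r).2 (Subgroup.subset_normalClosure (Or.inl hr))

def piW (n : ℕ) : HW n →* PresentedGroup (Wrels n) := PresentedGroup.toGroup pi_rels

theorem piW_of (i : Fin n) : piW n (x n i) = PresentedGroup.of i :=
  PresentedGroup.toGroup.of pi_rels

theorem piW_sq (k : Fin n) : piW n (x n k ^ 2) = 1 := by
  rw [map_pow, piW_of]
  show PresentedGroup.mk (Wrels n) (FreeGroup.of k) ^ 2 = 1
  rw [← map_pow]
  exact (QuotientGroup.eq_one_iff _).2 (Subgroup.subset_normalClosure (Or.inr ⟨k, rfl⟩))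

theorem piW_prodA (c : Fin n → ℤ) : piW n (prodA n c) = 1 := by
  unfold prodA
  rw [map_list_prod]
  apply List.prod_eq_one
  intro y hy
  rw [List.map_map] at hy
  obtain ⟨k, -, rfl⟩ := List.mem_map.1 hy
  show piW n ((x n k ^ 2) ^ (c k)) = 1
  rw [map_zpow, piW_sq, one_zpow]

theorem ker_piW_le : ∀ z : HW n, piW n z = 1 → z ∈ Agrp n := by
  intro z hz
  obtain ⟨w, rfl⟩ := PresentedGroup.mk_surjective (HWrels n) z
  have h1 : piW n (PresentedGroup.mk (HWrels n) w)
      = FreeGroup.lift (fun i => (PresentedGroup.of i : PresentedGroup (Wrels n))) w := rfl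
  rw [h1, lift_eq_mk] at hz
  have hw : w ∈ Subgroup.normalClosure (Wrels n) := (QuotientGroup.eq_one_iff w).1 hz
  haveI := Agrp_normal (n := n)
  haveI : ((Agrp n).comap (PresentedGroup.mk (HWrels n))).Normal :=
    Subgroup.Normal.comap (Agrp_normal) _
  have hle : Subgroup.normalClosure (Wrels n) ≤ (Agrp n).comap (PresentedGroup.mk (HWrels n)) := by
    apply Subgroup.normalClosure_le_normal
    rintro r (hr | ⟨i, rfl⟩)
    · show PresentedGroup.mk (HWrels n) r ∈ Agrp n
      rw [mk_rel_one hr]; exact one_mem _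
    · show PresentedGroup.mk (HWrels n) (FreeGroup.of i ^ 2) ∈ Agrp n
      rw [map_pow]
      exact Subgroup.subset_closure ⟨i, rfl⟩
  exact hle hw

/-! ### The affine permutation representation -/

def gPerm (n : ℕ) (i : Fin n) : Equiv.Perm (Fin n → ℤ) where
  toFun v := fun k => if k = i then v k + 1 else -(v k)
  invFun v := fun k => if k = i then v k - 1 else -(v k)
  left_inv v := by funext k; by_cases h : k = i <;> simp [h]
  right_inv v := by funext k; by_cases h : k = i <;> simp [h]

theorem gPerm_apply (i : Fin n) (v : Fin n → ℤ) (k : Fin n) :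
    gPerm n i v k = if k = i then v k + 1 else -(v k) := rfl

theorem chi_rels : ∀ r ∈ HWrels n, FreeGroup.lift (gPerm n) r = 1 := by
  rintro r ⟨i, j, hij, rfl⟩
  simp only [map_mul, map_inv, map_pow, FreeGroup.lift_apply_of]
  rw [mul_assoc, mul_assoc, inv_mul_eq_one]
  ext v k
  simp only [Equiv.Perm.mul_apply, sq]
  by_cases hk : k = i
  · subst hk
    simp [gPerm_apply, hij, Ne.symm hij]
  · by_cases hk' : k = j
    · subst hk'
      simp [gPerm_apply, hk, hij.symm]
    · simp [gPerm_apply, hk, hk']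

def chi (n : ℕ) : HW n →* Equiv.Perm (Fin n → ℤ) := PresentedGroup.toGroup chi_rels

theorem chi_of (i : Fin n) : chi n (x n i) = gPerm n i := PresentedGroup.toGroup.of chi_rels

theorem chi_sq (k : Fin n) (v : Fin n → ℤ) :
    chi n (x n k ^ 2) v = v + fun l => if l = k then 2 else 0 := by
  rw [map_pow, chi_of, sq]
  funext l
  by_cases h : l = k <;> simp [Equiv.Perm.mul_apply, gPerm_apply, h] <;> ring

theorem zpow_translation (p : Equiv.Perm (Fin n → ℤ)) (t : Fin n → ℤ)
    (h : ∀ v, p v = v + t) (m : ℤ) : ∀ v, (p ^ m) v = v + m • t := by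
  have hnat : ∀ (m : ℕ) (v), (p ^ m) v = v + (m : ℤ) • t := by
    intro m
    induction m with
    | zero => intro v; simp
    | succ m ih =>
      intro v
      rw [pow_succ, Equiv.Perm.mul_apply, h, ih]
      push_cast
      rw [add_smul, one_smul]
      abel
  intro v
  rcases le_or_gt 0 m with hm | hm
  · obtain ⟨m, rfl⟩ := Int.eq_ofNat_of_zero_le hm
    rw [zpow_natCast]
    exact hnat m v
  · obtain ⟨k, rfl⟩ := Int.exists_eq_neg_ofNat (le_of_lt hm)
    apply (p ^ (k : ℤ)).injective
    have h1 : (p ^ (k : ℤ)) ((p ^ (-(k : ℤ))) v) = v := by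
      rw [← Equiv.Perm.mul_apply, ← zpow_add]
      simp
    rw [h1, zpow_natCast, hnat]
    rw [add_assoc, ← add_smul]
    simp

def transSub (n : ℕ) (ε : Fin n → ℤ) : Subgroup (Equiv.Perm (Fin n → ℤ)) where
  carrier := {p | ∃ t : Fin n → ℤ, (∀ k, (2 * ε k) ∣ t k) ∧ ∀ v, p v = v + t}
  one_mem' := ⟨0, fun k => dvd_zero _, fun v => by simp⟩
  mul_mem' := by
    rintro p q ⟨t, ht, hp⟩ ⟨s, hs, hq⟩
    exact ⟨s + t, fun k => dvd_add (hs k) (ht k), fun v => by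
      rw [Equiv.Perm.mul_apply, hq, hp, add_assoc]⟩
  inv_mem' := by
    rintro p ⟨t, ht, hp⟩
    refine ⟨-t, fun k => dvd_neg.2 (ht k), fun v => ?_⟩
    apply p.injective
    rw [← Equiv.Perm.mul_apply, mul_inv_cancel, Equiv.Perm.one_apply, hp, add_assoc]
    simp

theorem unit_of_bijective (𝔞 : MM n) (f : HW n →* HW n)
    (hf : ∀ i, f (x n i) = x n i * prodA n (𝔞 i)) (hbij : Function.Bijective f) :
    IsUnit 𝔞 := by
  rw [part1]
  intro j
  obtain ⟨g, hg⟩ := hbij.2 (x n j ^ 2)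
  have hπf : (piW n).comp f = piW n := by
    apply PresentedGroup.ext
    intro i
    show piW n (f (x n i)) = piW n (x n i)
    rw [hf, map_mul, piW_prodA, mul_one]
  have hπg : piW n g = 1 := by
    have h2 := DFunLike.congr_fun hπf g
    rw [MonoidHom.comp_apply, hg, piW_sq] at h2
    exact h2.symm
  have hgA : g ∈ Agrp n := ker_piW_le g hπg
  set ψ := (chi n).comp f with hψ
  have hψsq : ∀ k (v : Fin n → ℤ), ψ (x n k ^ 2) v
      = v + (1 + 2 * 𝔞 k k) • fun l => if l = k then (2 : ℤ) else 0 := by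
    intro k
    have h3 : ψ (x n k ^ 2) = chi n ((x n k ^ 2) ^ (1 + 2 * 𝔞 k k)) := by
      rw [hψ, MonoidHom.comp_apply, f_sq 𝔞 f hf]
    rw [h3, map_zpow]
    exact zpow_translation _ _ (chi_sq k) _
  have hA_le : Agrp n ≤ (transSub n (fun k => 1 + 2 * 𝔞 k k)).comap ψ := by
    rw [Agrp, Subgroup.closure_le]
    rintro _ ⟨k, rfl⟩
    refine ⟨(1 + 2 * 𝔞 k k) • fun l => if l = k then (2 : ℤ) else 0, fun l => ?_, hψsq k⟩
    rcases eq_or_ne l k with rfl | hlk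
    · exact ⟨1, by simp [Pi.smul_apply]; ring⟩
    · simp [Pi.smul_apply, hlk]
  obtain ⟨t, ht, hpt⟩ := hA_le hgA
  have hval : ∀ v : Fin n → ℤ, ψ g v = v + fun l => if l = j then (2 : ℤ) else 0 := by
    intro v
    rw [hψ, MonoidHom.comp_apply, hg]
    exact chi_sq j v
  have ht_eq : t = fun l => if l = j then (2 : ℤ) else 0 := by
    have h0 := (hpt 0).symm.trans (hval 0)
    simpa using h0
  have hdvd : (2 * (1 + 2 * 𝔞 j j)) ∣ 2 := by
    have h4 := ht j
    rw [ht_eq] at h4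
    simpa using h4
  have h5 : (1 + 2 * 𝔞 j j) ∣ 1 := by
    rcases hdvd with ⟨c, hc⟩
    exact ⟨c, by linarith⟩
  rcases Int.isUnit_iff.1 (isUnit_of_dvd_one h5) with h' | h' <;> omega

end HWaux

/-- the group of units of `(M_n(ℤ), *)` consists exactly of the matrices
whose diagonal entries lie in `{0, -1}`; moreover a translation endomorphism `t_𝔞`
is an automorphism of `G_n` if and only if `𝔞` is a unit. -/

theorem stmt4 (n : ℕ) :
    (∀ 𝔞 : MM n, IsUnit 𝔞 ↔ ∀ i, 𝔞 i i = 0 ∨ 𝔞 i i = -1) ∧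
    (∀ (𝔞 : MM n) (f : HW n →* HW n), (∀ i, f (x n i) = x n i * aElt n 𝔞 i) →
      (Function.Bijective f ↔ IsUnit 𝔞)) := by
  constructor
  · exact fun 𝔞 => HWaux.part1 𝔞
  · intro 𝔞 f hf
    have hf' : ∀ i, f (x n i) = x n i * HWaux.prodA n (𝔞 i) := fun i => hf i
    exact ⟨HWaux.unit_of_bijective 𝔞 f hf', HWaux.bijective_of_unit 𝔞 f hf'⟩
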